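/- arXiv:math/9712241 — 2 statements merged into one kernel-verified Lean document; each statement's English description precedes it below -/
import Mathlib

section
/- Let M be a real antisymmetric n×n matrix and define X(π) = Σ_{1≤i<j≤n} M_{π(i),π(j)} for π ∈ S_n. For a subset S of {1,…,n} and i ∈ S, set a_{i,S} = Σ_{j∈S, j>i} M_{i,j} and b_{i,S} = Σ_{j∈S, j<i} M_{j,i}. Suppose that for every subset S of {1,…,n} there exists a bijection Θ: S → S such that (1) a_{i,S} − b_{i,S} = b_{Θ(i),S} − a_{Θ(i),S} for every i ∈ S, and (2) for each i ∈ S there exists a bijection Φ_i: S∖{i} → S∖{Θ(i)} with M_{j,k} = M_{Φ_i(j),Φ_i(k)} for all j,k ∈ S∖{i}. Then the pair (X(π), X(π∘c_I)) is exchangeable when π is uniform on S_n and I is uniform on {1,…,n}: for all real a, b, the number of pairs (π, i) ∈ S_n × {1,…,n} with X(π) = a and X(π∘c_i) = b equals the number of pairs (π, i) with X(π) = b and X(π∘c_i) = a. -/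
/-- The cycle `c_i` on `Fin n` mapping `i → i+1 → ⋯ → n-1 → i` and fixing `0,…,i-1`
(0-indexed version of the cycle on `{1,…,n}` mapping `i → i+1 → ⋯ → n → i`). -/
def cyc {n : ℕ} (i : Fin n) : Equiv.Perm (Fin n) :=
  (Fin.revPerm.trans ((Fin.cycleRange i.rev).trans Fin.revPerm)).symm

/-- The number of descents of a permutation of `Fin n`: the number of indices `i`
with `i+1 < n` and `π(i) > π(i+1)`. -/
def descents {n : ℕ} (π : Equiv.Perm (Fin n)) : ℕ :=
  (Finset.univ.filter fun i : Fin (n - 1) =>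
    π ⟨i.1 + 1, by have := i.2; omega⟩ < π ⟨i.1, by have := i.2; omega⟩).card

/-- The number of inversions of a permutation of `Fin n`: the number of pairs
`i < j` with `π(i) > π(j)`. -/
def inversions {n : ℕ} (π : Equiv.Perm (Fin n)) : ℕ :=
  (Finset.univ.filter fun p : Fin n × Fin n => p.1 < p.2 ∧ π p.2 < π p.1).card

/-- `X(π) = ∑_{i<j} M_{π(i),π(j)}`. -/
def Xstat {n : ℕ} (M : Fin n → Fin n → ℝ) (π : Equiv.Perm (Fin n)) : ℝ :=
  ∑ p ∈ Finset.univ.filter (fun p : Fin n × Fin n => p.1 < p.2), M (π p.1) (π p.2)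

/-- Expectation of a statistic under the uniform measure on the symmetric group. -/
noncomputable def permExp {n : ℕ} (f : Equiv.Perm (Fin n) → ℝ) : ℝ :=
  (∑ π : Equiv.Perm (Fin n), f π) / (n.factorial : ℝ)

/-- Variance of a statistic under the uniform measure on the symmetric group. -/
noncomputable def permVar {n : ℕ} (f : Equiv.Perm (Fin n) → ℝ) : ℝ :=
  permExp (fun π => (f π - permExp f) ^ 2)

open Finset

lemma cyc_symm_val : ∀ {n : ℕ} (i x : Fin n),
    ((cyc i).symm x).1 = if x.1 < i.1 then x.1 else if x.1 = i.1 then n - 1 else x.1 - 1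
  | n + 1, i, x => by
    have hrep : (cyc i).symm x = Fin.rev (Fin.cycleRange i.rev (Fin.rev x)) := rfl
    have hx := x.2
    have hi := i.2
    rcases lt_trichotomy x.1 i.1 with hc | hc | hc
    · rw [if_pos hc, hrep]
      have : i.rev < x.rev := by
        rw [Fin.lt_def, Fin.val_rev, Fin.val_rev]; omega
      rw [Fin.cycleRange_of_gt this, Fin.rev_rev]
    · rw [if_neg (by omega), if_pos hc, hrep]
      have hxi : x.rev = i.rev := by rw [Fin.ext_iff, Fin.val_rev, Fin.val_rev]; omega
      rw [hxi, Fin.cycleRange_self, Fin.val_rev]; simp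
    · rw [if_neg (by omega), if_neg (by omega), hrep]
      have hlt : x.rev < i.rev := by rw [Fin.lt_def, Fin.val_rev, Fin.val_rev]; omega
      rw [Fin.val_rev, Fin.coe_cycleRange_of_lt hlt, Fin.val_rev]
      omega

variable {n : ℕ}

lemma pair_sum_prod (f : Fin n → Fin n → ℝ) (P Q : Fin n → Prop)
    [DecidablePred P] [DecidablePred Q] :
    ∑ p ∈ univ.filter (fun p : Fin n × Fin n => P p.1 ∧ Q p.2), f p.1 p.2
      = ∑ a ∈ univ.filter P, ∑ b ∈ univ.filter Q, f a b := by
  rw [← Finset.sum_product']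
  congr 1
  ext p
  simp [Finset.mem_filter, Finset.mem_product]

lemma single_pair_sum (f : Fin n → Fin n → ℝ) (i : Fin n) (Q : Fin n → Prop) [DecidablePred Q] :
    ∑ p ∈ univ.filter (fun p : Fin n × Fin n => p.1 = i ∧ Q p.2), f p.1 p.2
      = ∑ b ∈ univ.filter Q, f i b := by
  rw [pair_sum_prod f (fun a => a = i) Q, Finset.filter_eq', if_pos (mem_univ i),
    Finset.sum_singleton]

lemma single_pair_sum' (f : Fin n → Fin n → ℝ) (i : Fin n) (P : Fin n → Prop) [DecidablePred P] :
    ∑ p ∈ univ.filter (fun p : Fin n × Fin n => P p.1 ∧ p.2 = i), f p.1 p.2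
      = ∑ a ∈ univ.filter P, f a i := by
  rw [pair_sum_prod f P (fun b => b = i), Finset.filter_eq', if_pos (mem_univ i)]
  simp

lemma Xstat_split (M : Fin n → Fin n → ℝ) (π : Equiv.Perm (Fin n)) (i : Fin n) :
    Xstat M π =
      ((∑ p ∈ univ.filter (fun p : Fin n × Fin n => p.1 < p.2 ∧ p.2 < i), M (π p.1) (π p.2))
      + (∑ p ∈ univ.filter (fun p : Fin n × Fin n => p.1 < i ∧ i ≤ p.2), M (π p.1) (π p.2))
      + (∑ q ∈ univ.filter (fun q : Fin n => i < q), M (π i) (π q)))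
      + (∑ p ∈ univ.filter (fun p : Fin n × Fin n => i < p.1 ∧ p.1 < p.2), M (π p.1) (π p.2)) := by
  have h3 : ∑ q ∈ univ.filter (fun q : Fin n => i < q), M (π i) (π q)
      = ∑ p ∈ univ.filter (fun p : Fin n × Fin n => p.1 = i ∧ i < p.2), M (π p.1) (π p.2) := by
    rw [single_pair_sum (fun a b => M (π a) (π b)) i (fun b => i < b)]
  rw [h3, Xstat]
  rw [Finset.sum_filter, Finset.sum_filter, Finset.sum_filter, Finset.sum_filter,
    Finset.sum_filter, ← Finset.sum_add_distrib, ← Finset.sum_add_distrib,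
    ← Finset.sum_add_distrib]
  apply Finset.sum_congr rfl
  intro p _
  simp only [Fin.lt_def, Fin.le_def, Fin.ext_iff]
  split_ifs
  all_goals try ring
  all_goals (exfalso; omega)

lemma Xstat_mul_cyc (M : Fin n → Fin n → ℝ) (hM : ∀ i j, M j i = - M i j)
    (π : Equiv.Perm (Fin n)) (i : Fin n) :
    Xstat M (π * cyc i)
      = Xstat M π - 2 * ∑ q ∈ univ.filter (fun q : Fin n => i < q), M (π i) (π q) := by
  have step1 : Xstat M (π * cyc i)
      = ∑ r ∈ univ.filter (fun r : Fin n × Fin n =>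
          (cyc i).symm r.1 < (cyc i).symm r.2), M (π r.1) (π r.2) := by
    rw [Xstat]
    refine Finset.sum_nbij' (fun p => (cyc i p.1, cyc i p.2))
      (fun r => ((cyc i).symm r.1, (cyc i).symm r.2)) ?_ ?_ ?_ ?_ ?_ <;>
      simp [Equiv.Perm.mul_apply]
  have step2 : univ.filter (fun r : Fin n × Fin n => (cyc i).symm r.1 < (cyc i).symm r.2)
      = univ.filter (fun p : Fin n × Fin n => (p.1 < p.2 ∧ ¬ p.1 = i))
        ∪ univ.filter (fun p : Fin n × Fin n => i < p.1 ∧ p.2 = i) := by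
    ext r
    have h1 := cyc_symm_val i r.1
    have h2 := cyc_symm_val i r.2
    have hr1 := r.1.2; have hr2 := r.2.2; have hi := i.2
    simp only [mem_union, mem_filter, mem_univ, true_and, Fin.lt_def, Fin.ext_iff]
    split_ifs at h1 h2 <;> omega
  have hdisj : Disjoint (univ.filter (fun p : Fin n × Fin n => (p.1 < p.2 ∧ ¬ p.1 = i)))
      (univ.filter (fun p : Fin n × Fin n => i < p.1 ∧ p.2 = i)) := by
    rw [Finset.disjoint_left]
    intro p hp hq
    simp only [mem_filter, mem_univ, true_and, Fin.lt_def, Fin.ext_iff] at hp hq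
    omega
  have hsplitX : univ.filter (fun p : Fin n × Fin n => p.1 < p.2)
      = univ.filter (fun p : Fin n × Fin n => (p.1 < p.2 ∧ ¬ p.1 = i))
        ∪ univ.filter (fun p : Fin n × Fin n => p.1 = i ∧ i < p.2) := by
    ext p
    simp only [mem_union, mem_filter, mem_univ, true_and, Fin.lt_def, Fin.ext_iff]
    omega
  have hdisj2 : Disjoint (univ.filter (fun p : Fin n × Fin n => (p.1 < p.2 ∧ ¬ p.1 = i)))
      (univ.filter (fun p : Fin n × Fin n => p.1 = i ∧ i < p.2)) := by
    rw [Finset.disjoint_left]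
    intro p hp hq
    simp only [mem_filter, mem_univ, true_and, Fin.lt_def, Fin.ext_iff] at hp hq
    omega
  have hX : Xstat M π
      = (∑ p ∈ univ.filter (fun p : Fin n × Fin n => (p.1 < p.2 ∧ ¬ p.1 = i)), M (π p.1) (π p.2))
        + ∑ q ∈ univ.filter (fun q : Fin n => i < q), M (π i) (π q) := by
    rw [Xstat, hsplitX, Finset.sum_union hdisj2,
      single_pair_sum (fun a b => M (π a) (π b)) i (fun b => i < b)]
  have hlast : ∑ p ∈ univ.filter (fun p : Fin n × Fin n => i < p.1 ∧ p.2 = i), M (π p.1) (π p.2)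
      = - ∑ q ∈ univ.filter (fun q : Fin n => i < q), M (π i) (π q) := by
    rw [single_pair_sum' (fun a b => M (π a) (π b)) i (fun a => i < a), ← Finset.sum_neg_distrib]
    exact Finset.sum_congr rfl fun q _ => hM (π i) (π q)
  rw [step1, step2, Finset.sum_union hdisj, hlast]
  rw [hX]
  ring

def tailset (π : Equiv.Perm (Fin n)) (i : Fin n) : Finset (Fin n) :=
  (univ.filter fun j => i ≤ j).image π

lemma tailset_eq (π : Equiv.Perm (Fin n)) (i : Fin n) :
    tailset π i = univ.filter (fun y => i ≤ π.symm y) := by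
  ext y
  simp only [tailset, mem_image, mem_filter, mem_univ, true_and]
  constructor
  · rintro ⟨j, hj, rfl⟩; simpa using hj
  · intro hy; exact ⟨π.symm y, hy, π.apply_symm_apply y⟩

lemma tailset_erase (π : Equiv.Perm (Fin n)) (i : Fin n) :
    (tailset π i).erase (π i) = univ.filter (fun y => i < π.symm y) := by
  rw [tailset_eq]
  ext y
  simp only [mem_erase, mem_filter, mem_univ, true_and]
  constructor
  · rintro ⟨hne, hle⟩
    rcases lt_or_eq_of_le hle with hlt | heq
    · exact hlt
    · exact absurd ((by rw [heq, π.apply_symm_apply] : π i = y)).symm hne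
  · intro hlt
    refine ⟨?_, le_of_lt hlt⟩
    intro hEq
    rw [hEq, Equiv.symm_apply_apply] at hlt
    exact lt_irrefl _ hlt

lemma image_lt (π : Equiv.Perm (Fin n)) (i : Fin n) :
    (univ.filter fun j => i < j).image π = (tailset π i).erase (π i) := by
  rw [tailset_erase]
  ext y
  simp only [mem_image, mem_filter, mem_univ, true_and]
  constructor
  · rintro ⟨j, hj, rfl⟩; simpa using hj
  · intro hy; exact ⟨π.symm y, hy, π.apply_symm_apply y⟩

lemma hx_mem (π : Equiv.Perm (Fin n)) (i : Fin n) : π i ∈ tailset π i := by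
  rw [tailset_eq]; simp

lemma head_not_mem (π : Equiv.Perm (Fin n)) {i j : Fin n} (hj : j < i) :
    π j ∉ tailset π i := by
  rw [tailset_eq]; simp only [mem_filter, mem_univ, true_and, Equiv.symm_apply_apply]
  exact not_le_of_gt hj

lemma tail_mem (π : Equiv.Perm (Fin n)) {i j : Fin n} (hj : i < j) :
    π j ∈ (tailset π i).erase (π i) := by
  rw [tailset_erase]; simp only [mem_filter, mem_univ, true_and, Equiv.symm_apply_apply]
  exact hj

lemma sum_tail (π : Equiv.Perm (Fin n)) (i : Fin n) (g : Fin n → ℝ) :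
    ∑ y ∈ tailset π i, g y = ∑ q ∈ univ.filter (fun q : Fin n => i ≤ q), g (π q) := by
  rw [tailset, Finset.sum_image (fun x _ y _ hxy => π.injective hxy)]

lemma sum_tail_lt (π : Equiv.Perm (Fin n)) (i : Fin n) (g : Fin n → ℝ) :
    ∑ y ∈ (tailset π i).erase (π i), g y
      = ∑ q ∈ univ.filter (fun q : Fin n => i < q), g (π q) := by
  rw [← image_lt, Finset.sum_image (fun x _ y _ hxy => π.injective hxy)]

lemma erase_sum (M : Fin n → Fin n → ℝ) (hM : ∀ i j, M j i = - M i j)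
    {S : Finset (Fin n)} {x : Fin n} (hx : x ∈ S) :
    ∑ y ∈ S.erase x, M x y
      = (∑ j ∈ S.filter (fun j => x < j), M x j) - (∑ j ∈ S.filter (fun j => j < x), M j x) := by
  have hsplit : S.erase x = S.filter (fun j => x < j) ∪ S.filter (fun j => j < x) := by
    ext y
    by_cases hyS : y ∈ S
    · simp only [mem_erase, mem_filter, mem_union, hyS, and_true, true_and]
      simp only [Ne, Fin.ext_iff, Fin.lt_def]
      omega
    · simp [hyS]
  have hdisj : Disjoint (S.filter (fun j => x < j)) (S.filter (fun j => j < x)) := by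
    rw [Finset.disjoint_left]
    intro y hy hy'
    simp only [mem_filter, Fin.lt_def] at hy hy'
    omega
  rw [hsplit, Finset.sum_union hdisj]
  have : ∑ y ∈ S.filter (fun j => j < x), M x y
      = - ∑ j ∈ S.filter (fun j => j < x), M j x := by
    rw [← Finset.sum_neg_distrib]
    exact Finset.sum_congr rfl fun y _ => hM y x
  rw [this]
  ring

lemma step (M : Fin n → Fin n → ℝ) (hM : ∀ i j, M j i = - M i j)
    (π : Equiv.Perm (Fin n)) (i : Fin n) (Θ Φ : Fin n → Fin n)
    (hΘmem : Θ (π i) ∈ tailset π i)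
    (hsum : ∑ y ∈ (tailset π i).erase (Θ (π i)), M (Θ (π i)) y
          = - ∑ y ∈ (tailset π i).erase (π i), M (π i) y)
    (hΦbij : Set.BijOn Φ ↑((tailset π i).erase (π i)) ↑((tailset π i).erase (Θ (π i))))
    (hΦM : ∀ j ∈ (tailset π i).erase (π i), ∀ k ∈ (tailset π i).erase (π i),
      M j k = M (Φ j) (Φ k)) :
    ∃ σ : Equiv.Perm (Fin n),
      (∀ j, σ j = if j < i then π j else if j = i then Θ (π i) else Φ (π j)) ∧
      tailset σ i = tailset π i ∧
      Xstat M σ = Xstat M (π * cyc i) ∧ Xstat M (σ * cyc i) = Xstat M π := by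
  classical
  set S := tailset π i with hS
  set x := π i with hxdef
  set f : Fin n → Fin n := fun j => if j < i then π j else if j = i then Θ x else Φ (π j)
    with hf
  have fval_lt : ∀ j, j < i → f j = π j := fun j h => if_pos h
  have fval_eq : f i = Θ x := by simp [hf]
  have fval_gt : ∀ j, i < j → f j = Φ (π j) := by
    intro j h
    simp only [hf]
    rw [if_neg (not_lt_of_gt h), if_neg (ne_of_gt h)]
  have hmem3 : ∀ j, i < j → Φ (π j) ∈ S.erase (Θ x) := by
    intro j hj
    have := hΦbij.mapsTo (by exact_mod_cast tail_mem π hj)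
    exact_mod_cast this
  have hinj : Function.Injective f := by
    intro j k hjk
    rcases lt_trichotomy j i with hj | hj | hj <;> rcases lt_trichotomy k i with hk | hk | hk
    · rw [fval_lt j hj, fval_lt k hk] at hjk; exact π.injective hjk
    · subst hk
      rw [fval_lt j hj, fval_eq] at hjk
      exact absurd (hjk ▸ hΘmem) (head_not_mem π hj)
    · rw [fval_lt j hj, fval_gt k hk] at hjk
      have := Finset.mem_of_mem_erase (hmem3 k hk)
      exact absurd (hjk ▸ this) (head_not_mem π hj)
    · subst hj
      rw [fval_eq, fval_lt k hk] at hjk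
      exact absurd (hjk ▸ hΘmem) (head_not_mem π hk)
    · subst hj; subst hk; rfl
    · subst hj
      rw [fval_eq, fval_gt k hk] at hjk
      exact absurd rfl (hjk ▸ (Finset.ne_of_mem_erase (hmem3 k hk)))
    · rw [fval_gt j hj, fval_lt k hk] at hjk
      have := Finset.mem_of_mem_erase (hmem3 j hj)
      exact absurd (hjk ▸ this) (head_not_mem π hk)
    · subst hk
      rw [fval_gt j hj, fval_eq] at hjk
      exact absurd rfl (hjk ▸ (Finset.ne_of_mem_erase (hmem3 j hj)))
    · rw [fval_gt j hj, fval_gt k hk] at hjk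
      have h1 : π j ∈ ((S.erase x : Finset (Fin n)) : Set (Fin n)) := by
        exact_mod_cast tail_mem π hj
      have h2 : π k ∈ ((S.erase x : Finset (Fin n)) : Set (Fin n)) := by
        exact_mod_cast tail_mem π hk
      exact π.injective (hΦbij.injOn h1 h2 hjk)
  set σ : Equiv.Perm (Fin n) := Equiv.ofBijective f (Finite.injective_iff_bijective.mp hinj)
    with hσdef
  have hσ : ∀ j, σ j = f j := fun j => rfl
  have hσi : σ i = Θ x := fval_eq
  have himage_gt : (univ.filter fun j : Fin n => i < j).image σ = S.erase (Θ x) := by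
    have h1 : (univ.filter fun j : Fin n => i < j).image ⇑σ
        = (univ.filter fun j : Fin n => i < j).image (fun j => Φ (π j)) := by
      apply Finset.image_congr
      intro j hj
      simp only [Finset.coe_filter, Set.mem_setOf_eq] at hj
      exact (hσ j).trans (fval_gt j hj.2)
    have h2 : (univ.filter fun j : Fin n => i < j).image (fun j => Φ (π j))
        = ((univ.filter fun j : Fin n => i < j).image π).image Φ := by
      rw [Finset.image_image]
      rfl
    rw [h1, h2, image_lt π i]
    apply Finset.coe_injective
    rw [Finset.coe_image]
    exact hΦbij.image_eq
  have hfilter_le : (univ.filter fun j : Fin n => i ≤ j)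
      = insert i (univ.filter fun j : Fin n => i < j) := by
    ext j
    simp only [mem_filter, mem_univ, true_and, mem_insert, Fin.lt_def, Fin.le_def, Fin.ext_iff]
    omega
  have htail : tailset σ i = S := by
    rw [tailset, hfilter_le, Finset.image_insert, himage_gt, hσi]
    exact Finset.insert_erase hΘmem
  refine ⟨σ, hσ, htail, ?_⟩
  -- T values
  have hTσ : ∑ q ∈ univ.filter (fun q : Fin n => i < q), M (σ i) (σ q)
      = ∑ y ∈ S.erase (Θ x), M (Θ x) y := by
    calc ∑ q ∈ univ.filter (fun q : Fin n => i < q), M (σ i) (σ q)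
        = ∑ q ∈ univ.filter (fun q : Fin n => i < q), M (Θ x) (σ q) := by rw [hσi]
      _ = ∑ y ∈ (tailset σ i).erase (σ i), M (Θ x) y :=
          (sum_tail_lt σ i (fun y => M (Θ x) y)).symm
      _ = ∑ y ∈ S.erase (Θ x), M (Θ x) y := by rw [htail, hσi]
  have hTπ : ∑ q ∈ univ.filter (fun q : Fin n => i < q), M x (π q)
      = ∑ y ∈ S.erase x, M x y := (sum_tail_lt π i (fun y => M x y)).symm
  have hT21 : ∑ q ∈ univ.filter (fun q : Fin n => i < q), M (σ i) (σ q)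
      = - ∑ q ∈ univ.filter (fun q : Fin n => i < q), M x (π q) := by
    rw [hTσ, hTπ, hsum]
  -- parts
  have hP1 : (∑ p ∈ univ.filter (fun p : Fin n × Fin n => p.1 < p.2 ∧ p.2 < i),
        M (σ p.1) (σ p.2))
      = ∑ p ∈ univ.filter (fun p : Fin n × Fin n => p.1 < p.2 ∧ p.2 < i),
        M (π p.1) (π p.2) := by
    apply Finset.sum_congr rfl
    intro p hp
    simp only [mem_filter, mem_univ, true_and] at hp
    rw [hσ, hσ, fval_lt _ (lt_trans hp.1 hp.2), fval_lt _ hp.2]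
  have hP2 : (∑ p ∈ univ.filter (fun p : Fin n × Fin n => p.1 < i ∧ i ≤ p.2),
        M (σ p.1) (σ p.2))
      = ∑ p ∈ univ.filter (fun p : Fin n × Fin n => p.1 < i ∧ i ≤ p.2),
        M (π p.1) (π p.2) := by
    rw [pair_sum_prod (fun a b => M (σ a) (σ b)) (fun a => a < i) (fun b => i ≤ b),
        pair_sum_prod (fun a b => M (π a) (π b)) (fun a => a < i) (fun b => i ≤ b)]
    apply Finset.sum_congr rfl
    intro a ha
    simp only [mem_filter, mem_univ, true_and] at ha
    calc ∑ b ∈ univ.filter (fun b : Fin n => i ≤ b), M (σ a) (σ b)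
        = ∑ b ∈ univ.filter (fun b : Fin n => i ≤ b), M (π a) (σ b) := by
          apply Finset.sum_congr rfl
          intro b _
          rw [hσ a, fval_lt a ha]
      _ = ∑ y ∈ tailset σ i, M (π a) y := (sum_tail σ i (fun y => M (π a) y)).symm
      _ = ∑ y ∈ tailset π i, M (π a) y := by rw [htail]
      _ = ∑ b ∈ univ.filter (fun b : Fin n => i ≤ b), M (π a) (π b) :=
          sum_tail π i (fun y => M (π a) y)
  have hP4 : (∑ p ∈ univ.filter (fun p : Fin n × Fin n => i < p.1 ∧ p.1 < p.2),
        M (σ p.1) (σ p.2))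
      = ∑ p ∈ univ.filter (fun p : Fin n × Fin n => i < p.1 ∧ p.1 < p.2),
        M (π p.1) (π p.2) := by
    apply Finset.sum_congr rfl
    intro p hp
    simp only [mem_filter, mem_univ, true_and] at hp
    rw [hσ, hσ, fval_gt _ hp.1, fval_gt _ (lt_trans hp.1 hp.2)]
    exact (hΦM (π p.1) (tail_mem π hp.1) (π p.2) (tail_mem π (lt_trans hp.1 hp.2))).symm
  have e1 := Xstat_split M σ i
  rw [hP1, hP2, hP4] at e1
  have e2 := Xstat_split M π i
  have e3 := Xstat_mul_cyc M hM π i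
  have e4 := Xstat_mul_cyc M hM σ i
  rw [← hxdef] at e2 e3
  constructor
  · linarith [hT21]
  · linarith [hT21]

lemma key (M : Fin n → Fin n → ℝ)
    (hM : ∀ i j, M j i = - M i j)
    (h : ∀ S : Finset (Fin n), ∃ Θ : Fin n → Fin n, Set.BijOn Θ ↑S ↑S ∧
      (∀ i ∈ S,
        (∑ j ∈ S.filter (fun j => i < j), M i j) - (∑ j ∈ S.filter (fun j => j < i), M j i)
          = (∑ j ∈ S.filter (fun j => j < Θ i), M j (Θ i))
            - (∑ j ∈ S.filter (fun j => Θ i < j), M (Θ i) j)) ∧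
      (∀ i ∈ S, ∃ Φ : Fin n → Fin n, Set.BijOn Φ ↑(S.erase i) ↑(S.erase (Θ i)) ∧
        ∀ j ∈ S.erase i, ∀ k ∈ S.erase i, M j k = M (Φ j) (Φ k))) (a b : ℝ) :
    Nat.card {p : Equiv.Perm (Fin n) × Fin n //
          Xstat M p.1 = a ∧ Xstat M (p.1 * cyc p.2) = b}
      ≤ Nat.card {p : Equiv.Perm (Fin n) × Fin n //
          Xstat M p.1 = b ∧ Xstat M (p.1 * cyc p.2) = a} := by
  classical
  choose Θ hΘbij hab hΦ using h
  choose Φ hΦbij hΦM using hΦ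
  have hstep : ∀ (π : Equiv.Perm (Fin n)) (i : Fin n), ∃ σ : Equiv.Perm (Fin n),
      (∀ j, σ j = if j < i then π j else if j = i then Θ (tailset π i) (π i)
        else Φ (tailset π i) (π i) (hx_mem π i) (π j)) ∧
      tailset σ i = tailset π i ∧
      Xstat M σ = Xstat M (π * cyc i) ∧ Xstat M (σ * cyc i) = Xstat M π := by
    intro π i
    have hxS : π i ∈ tailset π i := hx_mem π i
    have hΘx : Θ (tailset π i) (π i) ∈ tailset π i := by
      have := (hΘbij (tailset π i)).mapsTo (by exact_mod_cast hxS)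
      exact_mod_cast this
    apply step M hM π i (Θ (tailset π i)) (Φ (tailset π i) (π i) hxS) hΘx ?_
      (hΦbij (tailset π i) (π i) hxS) (hΦM (tailset π i) (π i) hxS)
    rw [erase_sum M hM hΘx, erase_sum M hM hxS]
    have := hab (tailset π i) (π i) hxS
    linarith
  choose σmap hσeq hσtail hσX1 hσX2 using hstep
  have hFinj : Function.Injective
      (fun p : Equiv.Perm (Fin n) × Fin n => (σmap p.1 p.2, p.2)) := by
    rintro ⟨π, i⟩ ⟨π', i'⟩ hpq
    rw [Prod.ext_iff] at hpq
    obtain ⟨hσeq', hi⟩ := hpq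
    simp only at hσeq' hi
    subst hi
    have hS : tailset π i = tailset π' i := by
      rw [← hσtail π i, ← hσtail π' i, hσeq']
    have hx : π i = π' i := by
      have e1 := hσeq π i i
      have e2 := hσeq π' i i
      rw [if_neg (lt_irrefl i), if_pos rfl] at e1 e2
      have hTheta : Θ (tailset π i) (π i) = Θ (tailset π i) (π' i) := by
        rw [← e1, hσeq', e2, hS]
      refine (hΘbij (tailset π i)).injOn ?_ ?_ hTheta
      · exact_mod_cast hx_mem π i
      · exact_mod_cast (hS ▸ hx_mem π' i)
    have hπ : π = π' := by
      apply Equiv.ext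
      intro j
      rcases lt_trichotomy j i with hj | hj | hj
      · have e1 := hσeq π i j
        have e2 := hσeq π' i j
        rw [if_pos hj] at e1 e2
        rw [← e1, ← e2, hσeq']
      · rw [hj, hx]
      · have e1 := hσeq π i j
        have e2 := hσeq π' i j
        rw [if_neg (not_lt_of_gt hj), if_neg (ne_of_gt hj)] at e1 e2
        have hPhiEq : Φ (tailset π i) (π i) (hx_mem π i) (π j)
            = Φ (tailset π i) (π i) (hx_mem π i) (π' j) := by
          rw [← e1, hσeq', e2]
          congr 1
          · exact hS.symm
          · exact hx.symm
        have m1 : π j ∈ ((((tailset π i).erase (π i)) : Finset (Fin n)) : Set (Fin n)) := by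
          exact_mod_cast tail_mem π hj
        have m2 : π' j ∈ ((((tailset π i).erase (π i)) : Finset (Fin n)) : Set (Fin n)) := by
          have := tail_mem π' hj
          rw [← hS, ← hx] at this
          exact_mod_cast this
        exact (hΦbij (tailset π i) (π i) (hx_mem π i)).injOn m1 m2 hPhiEq
    rw [hπ]
  refine Nat.card_le_card_of_injective
    (fun q : {p : Equiv.Perm (Fin n) × Fin n //
        Xstat M p.1 = a ∧ Xstat M (p.1 * cyc p.2) = b} =>
      (⟨(σmap q.1.1 q.1.2, q.1.2), by
        constructor
        · rw [hσX1 q.1.1 q.1.2]; exact q.2.2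
        · rw [hσX2 q.1.1 q.1.2]; exact q.2.1⟩ :
        {p : Equiv.Perm (Fin n) × Fin n //
          Xstat M p.1 = b ∧ Xstat M (p.1 * cyc p.2) = a})) ?_
  intro q q' hqq'
  apply Subtype.ext
  exact hFinj (congrArg Subtype.val hqq')


/-- Suppose the antisymmetric matrix `M` is such that every subset `S` of
indices carries a bijection `Θ : S → S` with `a_{i,S} − b_{i,S} = b_{Θ(i),S} − a_{Θ(i),S}`,
and for each `i ∈ S` a bijection `Φ_i : S∖{i} → S∖{Θ(i)}` preserving the matrix entries.
Then `(X(π), X(π∘c_I))` is exchangeable for `(π, I)` uniform on `S_n × {1,…,n}`. -/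
theorem exchangeable_of_bijections {n : ℕ} (M : Fin n → Fin n → ℝ)
    (hM : ∀ i j, M j i = - M i j)
    (h : ∀ S : Finset (Fin n), ∃ Θ : Fin n → Fin n, Set.BijOn Θ ↑S ↑S ∧
      (∀ i ∈ S,
        (∑ j ∈ S.filter (fun j => i < j), M i j) - (∑ j ∈ S.filter (fun j => j < i), M j i)
          = (∑ j ∈ S.filter (fun j => j < Θ i), M j (Θ i))
            - (∑ j ∈ S.filter (fun j => Θ i < j), M (Θ i) j)) ∧
      (∀ i ∈ S, ∃ Φ : Fin n → Fin n, Set.BijOn Φ ↑(S.erase i) ↑(S.erase (Θ i)) ∧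
        ∀ j ∈ S.erase i, ∀ k ∈ S.erase i, M j k = M (Φ j) (Φ k))) :
    ∀ a b : ℝ,
      Nat.card {p : Equiv.Perm (Fin n) × Fin n //
          Xstat M p.1 = a ∧ Xstat M (p.1 * cyc p.2) = b}
        = Nat.card {p : Equiv.Perm (Fin n) × Fin n //
          Xstat M p.1 = b ∧ Xstat M (p.1 * cyc p.2) = a} := by
  exact fun a b => le_antisymm (key M hM h a b) (key M hM h b a)
end

section
/- For every n ≥ 2, every π ∈ S_n, and every 1 ≤ i ≤ n, the move random to end step changes the number of descents by at most one: |Des((π∘c_i)⁻¹) − Des(π⁻¹)| ≤ 1. -/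
lemma cyc_inv_val {n : ℕ} (i x : Fin n) :
    (((cyc i)⁻¹ x : Fin n) : ℕ) =
      if x.1 < i.1 then x.1 else if x.1 = i.1 then n - 1 else x.1 - 1 := by
  rcases n with _ | m
  · exact i.elim0
  have hx : ((cyc i)⁻¹ x) = ((Fin.cycleRange i.rev) x.rev).rev := by
    simp [cyc, Equiv.Perm.inv_def]
  rw [hx]
  rcases lt_trichotomy x.1 i.1 with h | h | h
  · rw [Fin.cycleRange_of_gt (by rwa [Fin.rev_lt_rev, Fin.lt_def]), Fin.rev_rev,
      if_pos h]
  · have hxi : x = i := Fin.ext h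
    subst hxi
    rw [Fin.cycleRange_self]
    simp [Fin.val_rev, h]
  · have hlt : x.rev < i.rev := by rwa [Fin.rev_lt_rev, Fin.lt_def]
    rw [Fin.cycleRange_of_lt hlt]
    have hx2 : x.1 < m + 1 := x.2
    have hi2 : i.1 < m + 1 := i.2
    have hrv : (x.rev).1 = m + 1 - (x.1 + 1) := Fin.val_rev x
    have hirv : (i.rev).1 = m + 1 - (i.1 + 1) := Fin.val_rev i
    have hlt' : x.rev.1 < i.rev.1 := hlt
    have hadd : ((x.rev + 1 : Fin (m+1))).1 = x.rev.1 + 1 := by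
      rw [Fin.val_add_one_of_lt]
      rw [Fin.lt_def, Fin.val_last]
      omega
    rw [Fin.val_rev, hadd, if_neg (by omega), if_neg (by omega)]
    omega

lemma cyc_inv_lt_iff {n : ℕ} {i x y : Fin n} (hx : x ≠ i) (hy : y ≠ i) :
    (cyc i)⁻¹ x < (cyc i)⁻¹ y ↔ x < y := by
  have hx' : x.1 ≠ i.1 := fun h => hx (Fin.ext h)
  have hy' : y.1 ≠ i.1 := fun h => hy (Fin.ext h)
  have h1 := cyc_inv_val i x
  have h2 := cyc_inv_val i y
  have hxn := x.2
  have hyn := y.2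
  have hin := i.2
  rw [Fin.lt_def, Fin.lt_def, h1, h2]
  split_ifs <;> omega

lemma cyc_inv_lt_top {n : ℕ} {i x : Fin n} (hx : x ≠ i) :
    (cyc i)⁻¹ x < (cyc i)⁻¹ i := by
  have hx' : x.1 ≠ i.1 := fun h => hx (Fin.ext h)
  have h1 := cyc_inv_val i x
  have h2 := cyc_inv_val i i
  have hxn := x.2
  have hin := i.2
  rw [Fin.lt_def, h1, h2]
  split_ifs <;> omega

/-- For every `n ≥ 2`, `π ∈ S_n` and `i ∈ {1,…,n}`, the move random to
end step changes the number of descents by at most one: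
`|Des((π∘c_i)⁻¹) − Des(π⁻¹)| ≤ 1`. -/
theorem descents_moveToEnd_diff_le_one {n : ℕ} (hn : 2 ≤ n)
    (π : Equiv.Perm (Fin n)) (i : Fin n) :
    |(descents ((π * cyc i)⁻¹) : ℤ) - (descents π⁻¹ : ℤ)| ≤ 1 := by
  set σ := π⁻¹ with hσ
  set c := (cyc i)⁻¹ with hc
  have hτ : ∀ x, ((π * cyc i)⁻¹) x = c (σ x) := by
    intro x; rw [mul_inv_rev]; rfl
  set A : Fin (n-1) → Fin n := fun k => ⟨k.1, by have := k.2; omega⟩ with hA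
  set B : Fin (n-1) → Fin n := fun k => ⟨k.1 + 1, by have := k.2; omega⟩ with hB
  have hcard : ∀ (ρ : Equiv.Perm (Fin n)), (descents ρ : ℤ) =
      ∑ k : Fin (n-1), (if ρ (B k) < ρ (A k) then (1:ℤ) else 0) := by
    intro ρ
    rw [descents, Finset.card_filter]
    push_cast
    exact Finset.sum_congr rfl fun k _ => rfl
  have hrw : (descents ((π * cyc i)⁻¹) : ℤ) - (descents π⁻¹ : ℤ) =
      ∑ k : Fin (n-1), ((if c (σ (B k)) < c (σ (A k)) then (1:ℤ) else 0)
        - (if σ (B k) < σ (A k) then (1:ℤ) else 0)) := by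
    rw [hcard, hcard, ← Finset.sum_sub_distrib]
    exact Finset.sum_congr rfl fun k _ => by rw [hτ, hτ]
  rw [hrw]
  have cardA : ∑ k : Fin (n-1), (if σ (A k) = i then (1:ℤ) else 0) ≤ 1 := by
    rw [Finset.sum_boole]
    norm_cast
    rw [Finset.card_le_one]
    intro a ha b hb
    simp only [Finset.mem_filter] at ha hb
    have h := σ.injective (ha.2.trans hb.2.symm)
    simp only [hA, Fin.mk.injEq] at h
    exact Fin.ext h
  have cardB : ∑ k : Fin (n-1), (if σ (B k) = i then (1:ℤ) else 0) ≤ 1 := by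
    rw [Finset.sum_boole]
    norm_cast
    rw [Finset.card_le_one]
    intro a ha b hb
    simp only [Finset.mem_filter] at ha hb
    have h := σ.injective (ha.2.trans hb.2.symm)
    simp only [hB, Fin.mk.injEq] at h
    exact Fin.ext (by omega)
  have point : ∀ k : Fin (n-1),
      -(if σ (B k) = i then (1:ℤ) else 0) ≤
        ((if c (σ (B k)) < c (σ (A k)) then (1:ℤ) else 0)
          - (if σ (B k) < σ (A k) then (1:ℤ) else 0)) ∧
      ((if c (σ (B k)) < c (σ (A k)) then (1:ℤ) else 0)
          - (if σ (B k) < σ (A k) then (1:ℤ) else 0)) ≤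
        (if σ (A k) = i then (1:ℤ) else 0) := by
    intro k
    have hAB : σ (A k) ≠ σ (B k) := by
      intro h
      have h2 := σ.injective h
      simp only [hA, hB, Fin.mk.injEq] at h2
      omega
    by_cases hb : σ (B k) = i
    · have hna : σ (A k) ≠ i := fun h => hAB (h.trans hb.symm)
      have hnot : ¬ (c (σ (B k)) < c (σ (A k))) := by
        rw [hb]
        exact not_lt.2 (le_of_lt (cyc_inv_lt_top hna))
      rw [if_pos hb, if_neg hnot, if_neg hna]
      constructor <;> split_ifs <;> norm_num
    · rw [if_neg hb]
      by_cases ha : σ (A k) = i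
      · have h1 : c (σ (B k)) < c (σ (A k)) := by rw [ha]; exact cyc_inv_lt_top hb
        rw [if_pos h1, if_pos ha]
        constructor <;> split_ifs <;> norm_num
      · rw [if_neg ha]
        by_cases hlt : σ (B k) < σ (A k)
        · rw [if_pos hlt, if_pos ((cyc_inv_lt_iff hb ha).2 hlt)]
          norm_num
        · rw [if_neg hlt, if_neg (fun h => hlt ((cyc_inv_lt_iff hb ha).1 h))]
          norm_num
  rw [abs_le]
  constructor
  · have h1 := Finset.sum_le_sum (fun k (_ : k ∈ Finset.univ) => (point k).1)
    rw [Finset.sum_neg_distrib] at h1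
    linarith
  · have h2 := Finset.sum_le_sum (fun k (_ : k ∈ Finset.univ) => (point k).2)
    linarith
end
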